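/- arXiv:2603.23261 — 4 statements merged into one kernel-verified Lean document; each statement's English description precedes it below -/
import Mathlib

section
/- Consider f : ℝ → ℝ defined by f(x) = x^{p+1}·sin(1/x) + (1/p)·|x|^p for x ≠ 0 and f(0) = 0, with p ∈ ℕ, p ≥ 1. Then there exists a sequence (x_j) of local minima of f with x_j ≠ 0 for all j and x_j → 0. -/
open Filter

private lemma pow_sub_pow_aux (n : ℕ) {a c : ℝ} (h0 : 0 ≤ a) (h : a ≤ c) :
    c ^ (n + 1) - a ^ (n + 1) ≤ (n + 1) * c ^ n * (c - a) := by
  induction n with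
  | zero => simp
  | succ m ih =>
    have hc : 0 ≤ c := le_trans h0 h
    have han : a ^ (m + 1) ≤ c ^ (m + 1) := pow_le_pow_left₀ h0 h _
    have heq : c ^ (m + 2) - a ^ (m + 2) =
        c * (c ^ (m + 1) - a ^ (m + 1)) + a ^ (m + 1) * (c - a) := by ring
    have h1 : c * (c ^ (m + 1) - a ^ (m + 1)) ≤ c * ((m + 1) * c ^ m * (c - a)) :=
      mul_le_mul_of_nonneg_left ih hc
    have h2 : a ^ (m + 1) * (c - a) ≤ c ^ (m + 1) * (c - a) :=
      mul_le_mul_of_nonneg_right han (by linarith)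
    have h3 : c * (((m : ℝ) + 1) * c ^ m * (c - a)) = ((m : ℝ) + 1) * c ^ (m + 1) * (c - a) := by
      ring
    push_cast at *
    linarith

set_option maxHeartbeats 1000000 in
private lemma exists_min_aux (p : ℕ) (hp : 1 ≤ p) (f : ℝ → ℝ)
    (hf : ∀ x : ℝ, x ≠ 0 →
      f x = x ^ (p + 1) * Real.sin (1 / x) + (1 / (p : ℝ)) * |x| ^ p)
    (j : ℕ) :
    ∃ y : ℝ, 0 < y ∧ IsLocalMin f y ∧ y ≤ 1 / (Real.pi * (j + 1)) := by
  have hπ := Real.pi_pos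
  have hπ4 := Real.pi_le_four
  have hj0 : (0 : ℝ) ≤ (j : ℝ) := Nat.cast_nonneg j
  obtain ⟨N, hN⟩ : ∃ N : ℝ, N = (j : ℝ) + 1 := ⟨_, rfl⟩
  have hN1 : (1 : ℝ) ≤ N := by rw [hN]; linarith
  have hN0 : (0 : ℝ) < N := by linarith
  obtain ⟨A, hA⟩ : ∃ A : ℝ, A = 2 * Real.pi * N := ⟨_, rfl⟩
  obtain ⟨s, hs⟩ : ∃ s : ℝ, s = 1 / (2 * N) := ⟨_, rfl⟩
  have hs_pos : 0 < s := by rw [hs]; positivity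
  have hs_le : s ≤ 1 / 2 := by
    rw [hs, div_le_div_iff₀ (by linarith) (by norm_num)]
    linarith
  have hAπ : 0 < A - Real.pi := by
    rw [hA]
    nlinarith [mul_le_mul_of_nonneg_left hN1 hπ.le]
  have hsπ : s < Real.pi := by linarith [Real.pi_gt_three]
  have hAs : 0 < A - s := by linarith
  have hA_pos : 0 < A := by linarith
  have hA0 : A ≠ 0 := ne_of_gt hA_pos
  have hAs0 : A - s ≠ 0 := ne_of_gt hAs
  obtain ⟨a, ha⟩ : ∃ a : ℝ, a = 1 / A := ⟨_, rfl⟩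
  obtain ⟨c, hc⟩ : ∃ c : ℝ, c = 1 / (A - s) := ⟨_, rfl⟩
  obtain ⟨b, hb⟩ : ∃ b : ℝ, b = 1 / (A - Real.pi) := ⟨_, rfl⟩
  have ha_pos : 0 < a := by rw [ha]; exact one_div_pos.2 hA_pos
  have hc_pos : 0 < c := by rw [hc]; exact one_div_pos.2 hAs
  have hb_pos : 0 < b := by rw [hb]; exact one_div_pos.2 hAπ
  have hac : a < c := by
    rw [ha, hc]; exact one_div_lt_one_div_of_lt hAs (by linarith)
  have hcb : c < b := by
    rw [hc, hb]; exact one_div_lt_one_div_of_lt hAπ (by linarith)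
  have hab : a < b := lt_trans hac hcb
  have hp_pos : (0 : ℝ) < p := by exact_mod_cast hp
  have hNnat : N = ((j + 1 : ℕ) : ℝ) := by rw [hN]; push_cast; ring
  -- values of f
  have hfa : f a = (1 / (p : ℝ)) * a ^ p := by
    have h1a : 1 / a = A := by rw [ha, one_div_one_div]
    rw [hf a (ne_of_gt ha_pos), h1a, abs_of_pos ha_pos]
    have hsA : Real.sin A = 0 := by
      have : A = ((j + 1 : ℕ) : ℝ) * (2 * Real.pi) - 0 := by rw [hA, hNnat]; ring
      rw [this, Real.sin_nat_mul_two_pi_sub, Real.sin_zero, neg_zero]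
    rw [hsA]; ring
  have hfb : f b = (1 / (p : ℝ)) * b ^ p := by
    have h1b : 1 / b = A - Real.pi := by rw [hb, one_div_one_div]
    rw [hf b (ne_of_gt hb_pos), h1b, abs_of_pos hb_pos]
    have hsB : Real.sin (A - Real.pi) = 0 := by
      have : A - Real.pi = ((j + 1 : ℕ) : ℝ) * (2 * Real.pi) - Real.pi := by
        rw [hA, hNnat]; ring
      rw [this, Real.sin_nat_mul_two_pi_sub, Real.sin_pi, neg_zero]
    rw [hsB]; ring
  have hfc : f c = -(c ^ (p + 1) * Real.sin s) + (1 / (p : ℝ)) * c ^ p := by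
    have h1c : 1 / c = A - s := by rw [hc, one_div_one_div]
    rw [hf c (ne_of_gt hc_pos), h1c, abs_of_pos hc_pos]
    have hsC : Real.sin (A - s) = -Real.sin s := by
      have : A - s = ((j + 1 : ℕ) : ℝ) * (2 * Real.pi) - s := by rw [hA, hNnat]; ring
      rw [this, Real.sin_nat_mul_two_pi_sub]
    rw [hsC]; ring
  -- key inequality : f c < f a
  have hsin : s - s ^ 3 / 4 < Real.sin s :=
    lt_of_le_of_lt (by linarith [pow_pos hs_pos 3]) (Real.sin_gt_sub_cube hs_pos)
  have hca_eq : c - a = s * a * c := by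
    rw [ha, hc]
    field_simp
    ring
  obtain ⟨m, hm⟩ : ∃ m, p = m + 1 := ⟨p - 1, by omega⟩
  have hpow : c ^ p - a ^ p ≤ (p : ℝ) * c ^ (p - 1) * (c - a) := by
    have h := pow_sub_pow_aux m (le_of_lt ha_pos) (le_of_lt hac)
    rw [hm]
    simp only [Nat.add_sub_cancel]
    push_cast
    exact h
  have hkey : f c < f a := by
    rw [hfa, hfc]
    have h1 : (1 / (p : ℝ)) * (c ^ p - a ^ p) ≤ c ^ (p - 1) * (c - a) := by
      rw [div_mul_eq_mul_div, div_le_iff₀ hp_pos]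
      calc 1 * (c ^ p - a ^ p) = c ^ p - a ^ p := by ring
        _ ≤ (p : ℝ) * c ^ (p - 1) * (c - a) := hpow
        _ = c ^ (p - 1) * (c - a) * p := by ring
    have h2 : c ^ (p - 1) * (c - a) = s * a * c ^ p := by
      rw [hca_eq, hm]
      simp only [Nat.add_sub_cancel]
      ring
    have h3 : s * a < c * Real.sin s := by
      have hAs4 : A * s ≤ 4 := by
        rw [hA, hs, mul_one_div, div_le_iff₀ (by linarith : (0:ℝ) < 2 * N)]
        have h5 : Real.pi * N ≤ 4 * N := mul_le_mul_of_nonneg_right hπ4 hN0.le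
        linarith
      have hac4 : a ≤ c * (1 - s ^ 2 / 4) := by
        rw [ha, hc, div_mul_eq_mul_div, div_le_div_iff₀ hA_pos hAs]
        have h6 : A * s * s ≤ 4 * s := mul_le_mul_of_nonneg_right hAs4 (le_of_lt hs_pos)
        nlinarith [h6]
      calc s * a ≤ s * (c * (1 - s ^ 2 / 4)) :=
            mul_le_mul_of_nonneg_left hac4 (le_of_lt hs_pos)
        _ = c * (s - s ^ 3 / 4) := by ring
        _ < c * Real.sin s := mul_lt_mul_of_pos_left hsin hc_pos
    have h4 : s * a * c ^ p < c ^ (p + 1) * Real.sin s := by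
      have := mul_lt_mul_of_pos_right h3 (pow_pos hc_pos p)
      calc s * a * c ^ p < c * Real.sin s * c ^ p := this
        _ = c ^ (p + 1) * Real.sin s := by ring
    have h1' : 1 / (p : ℝ) * c ^ p - 1 / (p : ℝ) * a ^ p ≤ s * a * c ^ p := by
      rw [← h2]
      have := mul_sub (1 / (p : ℝ)) (c ^ p) (a ^ p)
      linarith [h1]
    linarith [h1', h4]
  -- continuity of f on [a,b]
  have hsub : ∀ x ∈ Set.Icc a b, x ≠ 0 := fun x hx =>
    ne_of_gt (lt_of_lt_of_le ha_pos hx.1)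
  have hcont : ContinuousOn f (Set.Icc a b) := by
    have hg : ContinuousOn
        (fun x : ℝ => x ^ (p + 1) * Real.sin (1 / x) + (1 / (p : ℝ)) * |x| ^ p)
        (Set.Icc a b) := by
      apply ContinuousOn.add
      · exact (continuousOn_pow _).mul
          (Real.continuous_sin.comp_continuousOn
            (continuousOn_const.div continuousOn_id (fun x hx => hsub x hx)))
      · exact continuousOn_const.mul (continuous_abs.continuousOn.pow p)
    exact hg.congr (fun x hx => hf x (hsub x hx))
  obtain ⟨y, hy_mem, hy_min⟩ :=
    isCompact_Icc.exists_isMinOn (Set.nonempty_Icc.2 (le_of_lt hab)) hcont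
  have hc_mem : c ∈ Set.Icc a b := ⟨le_of_lt hac, le_of_lt hcb⟩
  have hya : y ≠ a := by
    intro h
    have := hy_min hc_mem
    rw [h] at this
    exact absurd this (not_le.2 hkey)
  have hyb : y ≠ b := by
    intro h
    have := hy_min hc_mem
    rw [h] at this
    have hfab : f a < f b := by
      rw [hfa, hfb]
      have : a ^ p < b ^ p := pow_lt_pow_left₀ hab (le_of_lt ha_pos) (by omega)
      exact mul_lt_mul_of_pos_left this (by positivity)
    exact absurd this (not_le.2 (lt_trans hkey hfab))
  have hy_int : y ∈ Set.Ioo a b :=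
    ⟨lt_of_le_of_ne hy_mem.1 (Ne.symm hya), lt_of_le_of_ne hy_mem.2 hyb⟩
  refine ⟨y, lt_trans ha_pos hy_int.1, ?_, ?_⟩
  · exact hy_min.isLocalMin (Icc_mem_nhds hy_int.1 hy_int.2)
  · have hble : b ≤ 1 / (Real.pi * (j + 1)) := by
      rw [hb]
      apply one_div_le_one_div_of_le (by positivity)
      rw [hA, hN]
      push_cast
      nlinarith [mul_nonneg hπ.le hj0]
    linarith [hy_mem.2]

theorem stmt3 (p : ℕ) (hp : 1 ≤ p) (f : ℝ → ℝ)
    (hf : ∀ x : ℝ, x ≠ 0 →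
      f x = x ^ (p + 1) * Real.sin (1 / x) + (1 / (p : ℝ)) * |x| ^ p)
    (hf0 : f 0 = 0) :
    ∃ x : ℕ → ℝ, (∀ j, x j ≠ 0) ∧ (∀ j, IsLocalMin f (x j)) ∧
      Tendsto x atTop (nhds 0) := by
  choose x hx0 hxmin hxle using exists_min_aux p hp f hf
  refine ⟨x, fun j => ne_of_gt (hx0 j), hxmin, ?_⟩
  have hπ := Real.pi_pos
  have hlim : Tendsto (fun j : ℕ => 1 / (Real.pi * (j + 1))) atTop (nhds 0) := by
    have h1 : Tendsto (fun j : ℕ => 1 / ((j : ℝ) + 1)) atTop (nhds 0) :=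
      tendsto_one_div_add_atTop_nhds_zero_nat
    have h2 := h1.const_mul (1 / Real.pi)
    rw [mul_zero] at h2
    convert h2 using 2 with j
    field_simp
  exact tendsto_of_tendsto_of_tendsto_of_le_of_le tendsto_const_nhds hlim
    (fun j => le_of_lt (hx0 j)) hxle
end

section
/- Let S be a finite set and f_s : ℝⁿ → ℝ be C¹ functions for s ∈ S, with f(x) = max_{s ∈ S} f_s(x). Let x ∈ ℝⁿ, Δ > 0, and let z* be a minimizer of f over closedBall(x,Δ). If 0 is not in conv{∇f_s(z*) : s ∈ A(z*)}, where A(z*) = {s : f_s(z*) = f(z*)}, then ‖z* - x‖ = Δ and there exists λ in the simplex over A(z*) such that z* - x = -Δ · g/‖g‖ where g = Σ_{s ∈ A(z*)} λ_s ∇f_s(z*). -/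
open Metric Set Filter Topology InnerProductSpace Finset
open scoped RealInnerProductSpace Pointwise

-- core descent lemma
theorem descent_core {n : ℕ} {ι : Type*} [Fintype ι] [Nonempty ι]
    (fs : ι → EuclideanSpace ℝ (Fin n) → ℝ) (hfs : ∀ s, ContDiff ℝ 1 (fs s))
    (f : EuclideanSpace ℝ (Fin n) → ℝ)
    (hf : ∀ x, (∀ s, fs s x ≤ f x) ∧ ∃ s, fs s x = f x)
    (x zstar : EuclideanSpace ℝ (Fin n)) (Δ : ℝ)
    (hzmin : ∀ w ∈ closedBall x Δ, f zstar ≤ f w)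
    (e : EuclideanSpace ℝ (Fin n))
    (hpos : ∀ s, fs s zstar = f zstar → 0 < ⟪gradient (fs s) zstar, e⟫)
    (hball : ∀ᶠ t in 𝓝[>] (0:ℝ), zstar - t • e ∈ closedBall x Δ) : False := by
  have hev : ∀ s, ∀ᶠ t in 𝓝[>] (0:ℝ), fs s (zstar - t • e) < f zstar := by
    intro s
    by_cases hs : fs s zstar = f zstar
    · -- derivative argument
      have h1 : HasDerivAt (fun t : ℝ => zstar - t • e) (-e) 0 := by
        simpa using ((hasDerivAt_id (0:ℝ)).smul_const e).const_sub zstar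
      have h2 : HasFDerivAt (fs s) (fderiv ℝ (fs s) zstar) zstar := by
        simpa using (((hfs s).differentiable one_ne_zero) zstar).hasFDerivAt
      have h2' : HasFDerivAt (fs s) (fderiv ℝ (fs s) zstar) (zstar - (0:ℝ) • e) := by
        rw [zero_smul, sub_zero]; exact h2
      have hd : HasDerivAt (fun t : ℝ => fs s (zstar - t • e))
          (-(⟪gradient (fs s) zstar, e⟫)) 0 := by
        have := h2'.comp_hasDerivAt 0 h1
        have hge : ⟪gradient (fs s) zstar, e⟫ = fderiv ℝ (fs s) zstar e := by
          rw [gradient, toDual_symm_apply]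
        rw [hge, ← map_neg]; exact this
      have hslope := hasDerivAt_iff_tendsto_slope.mp hd
      have hneg : ∀ᶠ t in 𝓝[≠] (0:ℝ), slope (fun t : ℝ => fs s (zstar - t • e)) 0 t < 0 :=
        hslope.eventually_lt_const (by simpa using hpos s hs)
      filter_upwards [nhdsWithin_mono 0 (fun t (ht : t ∈ Set.Ioi 0) => ne_of_gt ht) hneg,
        self_mem_nhdsWithin] with t hts (htpos : 0 < t)
      rw [slope_def_field] at hts
      simp only [zero_smul, sub_zero] at hts
      have hA : fs s (zstar - t • e) - fs s zstar < 0 := by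
        have h := mul_neg_of_neg_of_pos hts htpos
        rwa [div_mul_cancel₀ _ (ne_of_gt htpos)] at h
      linarith [hs.le, hs.ge]
    · -- continuity argument
      have hlt : fs s zstar < f zstar := lt_of_le_of_ne ((hf zstar).1 s) hs
      have hc : ContinuousAt (fun t : ℝ => fs s (zstar - t • e)) 0 := by
        exact (((hfs s).continuous.comp (continuous_const.sub (continuous_id.smul continuous_const))).continuousAt)
      have : ∀ᶠ t in 𝓝 (0:ℝ), fs s (zstar - t • e) < f zstar := by
        have h0 : fs s (zstar - (0:ℝ) • e) < f zstar := by simpa using hlt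
        exact hc.eventually_lt continuousAt_const h0
      exact nhdsWithin_le_nhds this
  obtain ⟨t, ht, htb⟩ := ((eventually_all.2 hev).and hball).exists
  obtain ⟨s0, hs0⟩ := (hf (zstar - t • e)).2
  have := hzmin _ htb
  have := ht s0
  linarith [hs0.ge, hs0.le]

set_option maxHeartbeats 1000000 in
theorem stmt5 {n : ℕ} {ι : Type*} [Fintype ι] [Nonempty ι]
    (fs : ι → EuclideanSpace ℝ (Fin n) → ℝ) (hfs : ∀ s, ContDiff ℝ 1 (fs s))
    (f : EuclideanSpace ℝ (Fin n) → ℝ)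
    (hf : ∀ x, (∀ s, fs s x ≤ f x) ∧ ∃ s, fs s x = f x)
    (x zstar : EuclideanSpace ℝ (Fin n)) (Δ : ℝ) (hΔ : 0 < Δ)
    (hzmem : zstar ∈ closedBall x Δ)
    (hzmin : ∀ w ∈ closedBall x Δ, f zstar ≤ f w)
    (hcrit : (0 : EuclideanSpace ℝ (Fin n)) ∉
      convexHull ℝ {g | ∃ s, fs s zstar = f zstar ∧ g = gradient (fs s) zstar}) :
    ‖zstar - x‖ = Δ ∧
      ∃ l : ι → ℝ, (∀ s, 0 ≤ l s) ∧ (∑ s, l s) = 1 ∧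
        (∀ s, l s ≠ 0 → fs s zstar = f zstar) ∧
        zstar - x = -(Δ / ‖∑ s, l s • gradient (fs s) zstar‖) •
          (∑ s, l s • gradient (fs s) zstar) := by
  classical
  set S : Set (EuclideanSpace ℝ (Fin n)) := {g | ∃ s, fs s zstar = f zstar ∧ g = gradient (fs s) zstar} with hS
  have hSfin : S.Finite := by
    apply Set.Finite.subset (Set.finite_range (fun s => gradient (fs s) zstar))
    rintro g ⟨s, _, rfl⟩; exact ⟨s, rfl⟩
  have hKcl : IsClosed (convexHull ℝ S) := (hSfin.isCompact_convexHull ℝ).isClosed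
  have hKcv : Convex ℝ (convexHull ℝ S) := convex_convexHull ℝ S
  -- Claim 1 : the norm is Δ
  have hnorm : ‖zstar - x‖ = Δ := by
    rcases lt_or_eq_of_le (show ‖zstar - x‖ ≤ Δ by rwa [← dist_eq_norm, ← mem_closedBall]) with hlt | h
    · exfalso
      obtain ⟨φ, u, hu0, hub⟩ := geometric_hahn_banach_point_closed hKcv hKcl hcrit
      rw [map_zero] at hu0
      set e := (toDual ℝ (EuclideanSpace ℝ (Fin n))).symm φ with he
      refine descent_core fs hfs f hf x zstar Δ hzmin e ?_ ?_
      · intro s hs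
        have hgs : gradient (fs s) zstar ∈ convexHull ℝ S :=
          subset_convexHull ℝ S ⟨s, hs, rfl⟩
        have := hub _ hgs
        rw [real_inner_comm, he, toDual_symm_apply]
        linarith
      · have hc : ContinuousAt (fun t : ℝ => ‖zstar - t • e - x‖) 0 :=
          (continuous_norm.comp ((continuous_const.sub
            (continuous_id.smul continuous_const)).sub continuous_const)).continuousAt
        have h0 : ‖zstar - (0:ℝ) • e - x‖ < Δ := by
          rw [zero_smul, sub_zero]; exact hlt
        have := hc.eventually_lt continuousAt_const h0
        apply nhdsWithin_le_nhds
        filter_upwards [this] with t ht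
        rw [mem_closedBall, dist_eq_norm]; linarith
    · exact h
  refine ⟨hnorm, ?_⟩
  set v := zstar - x with hv
  have hvne : v ≠ 0 := by
    intro h
    rw [h, norm_zero] at hnorm; linarith
  -- P = K + cone(v)
  set R : Set (EuclideanSpace ℝ (Fin n)) := (fun t : ℝ => t • v) '' Set.Ici 0 with hR
  have hRcl : IsClosed R := (isClosedEmbedding_smul_left hvne).isClosedMap _ isClosed_Ici
  have hRcv : Convex ℝ R := by
    have := (convex_Ici (0:ℝ)).linear_image (LinearMap.toSpanSingleton ℝ (EuclideanSpace ℝ (Fin n)) v)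
    simpa [LinearMap.toSpanSingleton_apply] using this
  set P : Set (EuclideanSpace ℝ (Fin n)) := convexHull ℝ S + R with hP
  have hPcl : IsClosed P := hRcl.add_left_of_isCompact (hSfin.isCompact_convexHull ℝ)
  have hPcv : Convex ℝ P := hKcv.add hRcv
  have h0P : (0 : EuclideanSpace ℝ (Fin n)) ∈ P := by
    by_contra h0P
    obtain ⟨φ, u, hu0, hub⟩ := geometric_hahn_banach_point_closed hPcv hPcl h0P
    rw [map_zero] at hu0
    have hmemP : ∀ g ∈ convexHull ℝ S, ∀ t : ℝ, 0 ≤ t → g + t • v ∈ P :=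
      fun g hg t ht => Set.add_mem_add hg ⟨t, ht, rfl⟩
    obtain ⟨s0, hs0⟩ := (hf zstar).2
    have hg0 : gradient (fs s0) zstar ∈ convexHull ℝ S := subset_convexHull ℝ S ⟨s0, hs0, rfl⟩
    have hφv : 0 ≤ φ v := by
      by_contra hneg
      push_neg at hneg
      have ht0 : 0 < (u - φ (gradient (fs s0) zstar)) / φ v := by
        apply div_pos_of_neg_of_neg _ hneg
        linarith [hub _ (by simpa using hmemP _ hg0 0 le_rfl)]
      have := hub _ (hmemP _ hg0 _ ht0.le)
      rw [map_add, map_smul] at this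
      simp only [smul_eq_mul] at this
      rw [div_mul_cancel₀ _ (ne_of_lt hneg)] at this
      linarith
    -- build descent direction
    set e0 := (toDual ℝ (EuclideanSpace ℝ (Fin n))).symm φ with he0
    set M : ℝ := ∑ s : ι, |⟪gradient (fs s) zstar, v⟫| with hM
    have hM0 : 0 ≤ M := Finset.sum_nonneg fun s _ => abs_nonneg _
    have hMb : ∀ s : ι, |⟪gradient (fs s) zstar, v⟫| ≤ M :=
      fun s => Finset.single_le_sum (f := fun s => |⟪gradient (fs s) zstar, v⟫|)
        (fun s _ => abs_nonneg _) (Finset.mem_univ s)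
    set c : ℝ := u / (2 * (M + 1)) with hc
    have hcpos : 0 < c := div_pos hu0 (by linarith)
    set e := e0 + c • v with he
    have hinner : ∀ g : EuclideanSpace ℝ (Fin n), ⟪g, e⟫ = φ g + c * ⟪g, v⟫ := by
      intro g
      rw [he, inner_add_right, real_inner_smul_right, real_inner_comm e0 g, he0,
        toDual_symm_apply]
    have hvpos : 0 < ⟪v, e⟫ := by
      rw [hinner]
      have : ⟪v, v⟫ = ‖v‖ ^ 2 := real_inner_self_eq_norm_sq v
      rw [this, hnorm]
      nlinarith [hφv, mul_pos hcpos (pow_pos hΔ 2)]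
    refine descent_core fs hfs f hf x zstar Δ hzmin e ?_ ?_
    · intro s hs
      rw [hinner]
      have h1 : u < φ (gradient (fs s) zstar) :=
        hub _ (by simpa using hmemP _ (subset_convexHull ℝ S ⟨s, hs, rfl⟩) 0 le_rfl)
      have h2 : -M ≤ ⟪gradient (fs s) zstar, v⟫ := neg_le_of_abs_le (hMb s)
      have h3 : c * M < u / 2 := by
        rw [hc]
        rw [div_mul_eq_mul_div, div_lt_div_iff₀ (by linarith) (by norm_num)]
        nlinarith
      nlinarith [hcpos]
    · have hδ : 0 < 2 * ⟪v, e⟫ / (‖e‖ ^ 2 + 1) := by positivity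
      filter_upwards [Ioc_mem_nhdsGT hδ] with t ht
      obtain ⟨ht0, ht1⟩ := ht
      rw [mem_closedBall, dist_eq_norm]
      have hexp : ‖zstar - t • e - x‖ ^ 2 = Δ ^ 2 - 2 * (t * ⟪v, e⟫) + t ^ 2 * ‖e‖ ^ 2 := by
        have h4 : zstar - t • e - x = v - t • e := by rw [hv]; abel
        rw [h4, norm_sub_sq_real, real_inner_smul_right, norm_smul, hnorm,
          Real.norm_eq_abs, abs_of_pos ht0]
        ring
      have hle : ‖zstar - t • e - x‖ ^ 2 ≤ Δ ^ 2 := by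
        rw [hexp]
        have : t * (‖e‖ ^ 2 + 1) ≤ 2 * ⟪v, e⟫ := by
          rw [← le_div_iff₀ (by positivity)] at *
          exact ht1
        nlinarith
      nlinarith [norm_nonneg (zstar - t • e - x), hΔ]
  -- extract the convex combination
  rw [hP, Set.mem_add] at h0P
  obtain ⟨g, hg, r, ⟨t0, ht0, rfl⟩, hsum⟩ := h0P
  have ht0pos : 0 < t0 := by
    rcases lt_or_eq_of_le (Set.mem_Ici.mp ht0 : (0:ℝ) ≤ t0) with h | h
    · exact h
    · exfalso
      apply hcrit
      subst h
      have hg0' : g = 0 := by simpa using hsum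
      rwa [← hg0']
  have hgeq : g = -(t0 • v) := eq_neg_of_add_eq_zero_left hsum
  have hnormg : ‖g‖ = t0 * Δ := by
    rw [hgeq, norm_neg, norm_smul, Real.norm_eq_abs, abs_of_pos ht0pos, hnorm]
  have hveq : v = -(Δ / ‖g‖) • g := by
    rw [hnormg, hgeq, smul_neg, neg_smul, neg_neg, smul_smul]
    rw [show Δ / (t0 * Δ) * t0 = 1 by field_simp]
    rw [one_smul]
  -- represent g as a convex combination
  rw [_root_.convexHull_eq] at hg
  obtain ⟨κ, T, w, zf, hw0, hw1, hzS, hcm⟩ := hg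
  have hgsum : ∑ i ∈ T, w i • zf i = g := by
    rw [← hcm, Finset.centerMass_eq_of_sum_1 _ _ hw1]
  set σ : κ → ι := fun i =>
    if h : ∃ s, fs s zstar = f zstar ∧ zf i = gradient (fs s) zstar then h.choose
    else Classical.arbitrary ι with hσdef
  have hσspec : ∀ i ∈ T, fs (σ i) zstar = f zstar ∧ zf i = gradient (fs (σ i)) zstar := by
    intro i hiT
    have h : ∃ s, fs s zstar = f zstar ∧ zf i = gradient (fs s) zstar := hzS i hiT
    have hσi : σ i = h.choose := by rw [hσdef]; exact dif_pos h
    rw [hσi]; exact h.choose_spec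
  set l : ι → ℝ := fun s => ∑ i ∈ T.filter (fun i => σ i = s), w i with hldef
  have hkey : ∑ s, l s • gradient (fs s) zstar = g := by
    calc ∑ s, l s • gradient (fs s) zstar
        = ∑ s, ∑ i ∈ T.filter (fun i => σ i = s), w i • gradient (fs s) zstar := by
          refine Finset.sum_congr rfl fun s _ => ?_
          rw [hldef, Finset.sum_smul]
      _ = ∑ s, ∑ i ∈ T.filter (fun i => σ i = s), w i • zf i := by
          refine Finset.sum_congr rfl fun s _ => Finset.sum_congr rfl fun i hi => ?_
          obtain ⟨hiT, hσi⟩ := Finset.mem_filter.mp hi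
          rw [← hσi, ← (hσspec i hiT).2]
      _ = ∑ i ∈ T, w i • zf i := Finset.sum_fiberwise T σ (fun i => w i • zf i)
      _ = g := hgsum
  refine ⟨l, ?_, ?_, ?_, ?_⟩
  · intro s
    exact Finset.sum_nonneg fun i hi => hw0 i (Finset.mem_filter.mp hi).1
  · rw [hldef]
    rw [Finset.sum_fiberwise T σ w]
    exact hw1
  · intro s hls
    obtain ⟨i, hi, hwi⟩ := Finset.exists_ne_zero_of_sum_ne_zero hls
    obtain ⟨hiT, hσi⟩ := Finset.mem_filter.mp hi
    rw [← hσi]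
    exact (hσspec i hiT).1
  · rw [hkey, ← hveq]
end

section
/- Let f : ℝⁿ → ℝ be a finite maximum f(x) = max_{s ∈ S} f_s(x) of C² functions f_s, S finite, and suppose f grows sharply around x*: there are a neighborhood U of x* and β > 0 with f(x) ≥ f(x*) + β‖x - x*‖ for all x ∈ U. Then there is an open neighborhood U' of x* such that ‖ξ‖ > β/2 for all x ∈ U' \ {x*} and all ξ ∈ ∂f(x), where ∂f is the Clarke subdifferential. In particular, x* is the only critical point of f in U'. -/
open Metric

theorem stmt6 {n : ℕ} {ι : Type*} [Fintype ι] [Nonempty ι]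
    (fs : ι → EuclideanSpace ℝ (Fin n) → ℝ) (hfs : ∀ s, ContDiff ℝ 2 (fs s))
    (f : EuclideanSpace ℝ (Fin n) → ℝ)
    (hf : ∀ x, (∀ s, fs s x ≤ f x) ∧ ∃ s, fs s x = f x)
    (xstar : EuclideanSpace ℝ (Fin n)) (β : ℝ) (hβ : 0 < β)
    (hgrowth : ∃ U ∈ nhds xstar, ∀ x ∈ U, f xstar + β * ‖x - xstar‖ ≤ f x) :
    ∃ U' : Set (EuclideanSpace ℝ (Fin n)), IsOpen U' ∧ xstar ∈ U' ∧
      (∀ x ∈ U', x ≠ xstar →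
        ∀ ξ ∈ convexHull ℝ {g | ∃ s, fs s x = f x ∧ g = gradient (fs s) x},
          β / 2 < ‖ξ‖) ∧
      (∀ x ∈ U', x ≠ xstar →
        (0 : EuclideanSpace ℝ (Fin n)) ∉
          convexHull ℝ {g | ∃ s, fs s x = f x ∧ g = gradient (fs s) x}) := by
  classical
  -- gradients are C¹ hence locally Lipschitz
  have hgradCD : ∀ s, ContDiff ℝ 1 (gradient (fs s)) := by
    intro s
    have h1 : ContDiff ℝ 1 (fderiv ℝ (fs s)) := (hfs s).fderiv_right (by norm_num)
    exact ((InnerProductSpace.toDual ℝ (EuclideanSpace ℝ (Fin n))).symm.contDiff).comp h1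
  have hLL : ∀ s, ∃ K : NNReal, ∃ t ∈ nhds xstar, LipschitzOnWith K (gradient (fs s)) t :=
    fun s => (hgradCD s).locallyLipschitz xstar
  choose K t ht hlip using hLL
  have hball : ∀ s, ∃ ε > 0, ball xstar ε ⊆ t s := fun s => Metric.mem_nhds_iff.1 (ht s)
  choose ε hε hεball using hball
  obtain ⟨U, hU, hgr⟩ := hgrowth
  obtain ⟨ε0, hε0, hε0U⟩ := Metric.mem_nhds_iff.1 hU
  set Km : NNReal := Finset.univ.sup K with hKm
  have hKle : ∀ s, (K s : ℝ) ≤ Km := fun s => by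
    exact_mod_cast NNReal.coe_le_coe.2 (Finset.le_sup (Finset.mem_univ s))
  set r : ℝ := min (min ε0 (Finset.univ.inf' Finset.univ_nonempty ε)) (β / (2 * (Km + 1))) with hr
  have hrpos : 0 < r := by
    refine lt_min (lt_min hε0 ?_) ?_
    · exact (Finset.lt_inf'_iff _).2 fun s _ => hε s
    · positivity
  have hrε : ∀ s, r ≤ ε s := fun s =>
    le_trans (le_trans (min_le_left _ _) (min_le_right _ _))
      (Finset.inf'_le _ (Finset.mem_univ s))
  have hrε0 : r ≤ ε0 := le_trans (min_le_left _ _) (min_le_left _ _)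
  have hKr : (Km : ℝ) * r < β / 2 := by
    have h1 : (Km : ℝ) * r ≤ Km * (β / (2 * (Km + 1))) := by
      exact mul_le_mul_of_nonneg_left (min_le_right _ _) Km.coe_nonneg
    have h2 : (Km : ℝ) * (β / (2 * (Km + 1))) < β / 2 := by
      have hq : β / (2 * ((Km : ℝ) + 1)) * (2 * ((Km : ℝ) + 1)) = β :=
        div_mul_cancel₀ _ (by positivity)
      nlinarith [Km.coe_nonneg,
        div_pos hβ (show (0:ℝ) < 2 * ((Km : ℝ) + 1) by positivity)]
    linarith
  set c : ℝ := β - Km * r with hc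
  have hcβ : β / 2 < c := by simp only [hc]; linarith
  have main : ∀ x ∈ ball xstar r, x ≠ xstar →
      ∀ ξ ∈ convexHull ℝ {g : EuclideanSpace ℝ (Fin n) | ∃ s, fs s x = f x ∧ g = gradient (fs s) x},
        β / 2 < ‖ξ‖ := by
    intro x hx hxne ξ hξ
    have hxn : 0 < ‖x - xstar‖ := by
      rw [norm_pos_iff, sub_ne_zero]; exact hxne
    -- key: every active gradient g satisfies ⟪g, x - xstar⟫ ≥ c * ‖x - xstar‖
    have key : ∀ g ∈ {g : EuclideanSpace ℝ (Fin n) | ∃ s, fs s x = f x ∧ g = gradient (fs s) x},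
        c * ‖x - xstar‖ ≤ inner ℝ g (x - xstar) := by
      rintro g ⟨s, hact, rfl⟩
      set g := gradient (fs s) x
      -- MVT estimate on the segment [x, xstar]
      set φ : EuclideanSpace ℝ (Fin n) → ℝ := fun y => fs s y - (fderiv ℝ (fs s) x) y with hφ
      have hdiff : Differentiable ℝ (fs s) := (hfs s).differentiable (by norm_num)
      have hφd : ∀ y ∈ segment ℝ x xstar,
          HasFDerivWithinAt φ (fderiv ℝ (fs s) y - fderiv ℝ (fs s) x)
            (segment ℝ x xstar) y := by
        intro y hy
        exact (((hdiff y).hasFDerivAt.sub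
          ((fderiv ℝ (fs s) x).hasFDerivAt)).hasFDerivWithinAt)
      have hseg_ball : segment ℝ x xstar ⊆ ball xstar r :=
        (convex_ball xstar r).segment_subset hx (mem_ball_self hrpos)
      have hseg_t : segment ℝ x xstar ⊆ t s := fun y hy =>
        hεball s (mem_ball.2 (lt_of_lt_of_le (mem_ball.1 (hseg_ball hy)) (hrε s)))
      have hseg_cb : segment ℝ x xstar ⊆ closedBall x ‖xstar - x‖ :=
        (convex_closedBall x ‖xstar - x‖).segment_subset
          (mem_closedBall_self (norm_nonneg _))
          (by simp [mem_closedBall, dist_eq_norm])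
      have hbound : ∀ y ∈ segment ℝ x xstar,
          ‖fderiv ℝ (fs s) y - fderiv ℝ (fs s) x‖ ≤ (Km : ℝ) * ‖xstar - x‖ := by
        intro y hy
        have h1 : ‖fderiv ℝ (fs s) y - fderiv ℝ (fs s) x‖
            = ‖gradient (fs s) y - gradient (fs s) x‖ := by
          rw [show gradient (fs s) y - gradient (fs s) x
              = (InnerProductSpace.toDual ℝ (EuclideanSpace ℝ (Fin n))).symm
                  (fderiv ℝ (fs s) y - fderiv ℝ (fs s) x) by
            simp [gradient, map_sub]]
          rw [LinearIsometryEquiv.norm_map]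
        have h2 : ‖gradient (fs s) y - gradient (fs s) x‖ ≤ (K s : ℝ) * ‖y - x‖ := by
          have := (hlip s).dist_le_mul y (hseg_t hy) x (hseg_t (left_mem_segment ℝ x xstar))
          simpa [dist_eq_norm] using this
        have h3 : ‖y - x‖ ≤ ‖xstar - x‖ := by
          have := hseg_cb hy
          simpa [mem_closedBall, dist_eq_norm] using this
        calc ‖fderiv ℝ (fs s) y - fderiv ℝ (fs s) x‖
            ≤ (K s : ℝ) * ‖y - x‖ := h1 ▸ h2
          _ ≤ (Km : ℝ) * ‖xstar - x‖ :=
              mul_le_mul (hKle s) h3 (norm_nonneg _) Km.coe_nonneg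
      have hMVT : ‖φ xstar - φ x‖ ≤ (Km : ℝ) * ‖xstar - x‖ * ‖xstar - x‖ :=
        (convex_segment x xstar).norm_image_sub_le_of_norm_hasFDerivWithin_le
          hφd hbound (left_mem_segment ℝ x xstar) (right_mem_segment ℝ x xstar)
      have hinner : ∀ v : EuclideanSpace ℝ (Fin n), (inner ℝ g v : ℝ) = fderiv ℝ (fs s) x v := by
        intro v
        exact InnerProductSpace.toDual_symm_apply
      have hφeq : φ xstar - φ x
          = fs s xstar - fs s x - inner ℝ g (xstar - x) := by
        simp only [hφ]
        rw [hinner (xstar - x), map_sub]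
        ring
      have habs : fs s xstar - fs s x - (inner ℝ g (xstar - x) : ℝ)
          ≥ -((Km : ℝ) * ‖xstar - x‖ * ‖xstar - x‖) := by
        have h' : |fs s xstar - fs s x - (inner ℝ g (xstar - x) : ℝ)|
            ≤ (Km : ℝ) * ‖xstar - x‖ * ‖xstar - x‖ := by
          rw [← hφeq, ← Real.norm_eq_abs]; exact hMVT
        linarith [(abs_le.1 h').1]
      have hgrowth' : fs s xstar + β * ‖x - xstar‖ ≤ fs s x := by
        have h1 : fs s x = f x := hact
        have h2 : fs s xstar ≤ f xstar := (hf xstar).1 s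
        have h3 : f xstar + β * ‖x - xstar‖ ≤ f x :=
          hgr x (hε0U (mem_ball.2 (lt_of_lt_of_le (mem_ball.1 hx) hrε0)))
        linarith
      have hnormsymm : ‖xstar - x‖ = ‖x - xstar‖ := norm_sub_rev _ _
      have hinner2 : (inner ℝ g (x - xstar) : ℝ) = - inner ℝ g (xstar - x) := by
        rw [← inner_neg_right]; congr 1; abel
      have hxr : ‖x - xstar‖ < r := by
        have := mem_ball.1 hx; rwa [dist_eq_norm] at this
      have : (inner ℝ g (x - xstar) : ℝ)
          ≥ β * ‖x - xstar‖ - (Km : ℝ) * ‖x - xstar‖ * ‖x - xstar‖ := by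
        rw [hinner2]
        rw [hnormsymm] at habs
        linarith
      calc c * ‖x - xstar‖ = (β - Km * r) * ‖x - xstar‖ := by rw [hc]
        _ ≤ β * ‖x - xstar‖ - (Km : ℝ) * ‖x - xstar‖ * ‖x - xstar‖ := by
            have : (Km : ℝ) * ‖x - xstar‖ ≤ (Km : ℝ) * r :=
              mul_le_mul_of_nonneg_left hxr.le Km.coe_nonneg
            nlinarith
        _ ≤ inner ℝ g (x - xstar) := this
    -- pass to convex hull via a half-space
    have hlin : IsLinearMap ℝ (fun g : EuclideanSpace ℝ (Fin n) => (inner ℝ g (x - xstar) : ℝ)) :=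
      ⟨fun a b => inner_add_left _ _ _, fun m a => real_inner_smul_left _ _ _⟩
    have hhull : convexHull ℝ {g : EuclideanSpace ℝ (Fin n) | ∃ s, fs s x = f x ∧ g = gradient (fs s) x}
        ⊆ {g : EuclideanSpace ℝ (Fin n) | c * ‖x - xstar‖ ≤ inner ℝ g (x - xstar)} :=
      convexHull_min key (convex_halfSpace_ge hlin _)
    have hξ' : c * ‖x - xstar‖ ≤ inner ℝ ξ (x - xstar) := hhull hξ
    have hcs : (inner ℝ ξ (x - xstar) : ℝ) ≤ ‖ξ‖ * ‖x - xstar‖ := real_inner_le_norm _ _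
    have : c ≤ ‖ξ‖ := le_of_mul_le_mul_right (by linarith) hxn
    linarith
  refine ⟨ball xstar r, isOpen_ball, mem_ball_self hrpos, main, ?_⟩
  intro x hx hxne h0
  have h := main x hx hxne 0 h0
  rw [norm_zero] at h
  linarith
end

section
/- Let f : ℝⁿ → ℝ be a finite maximum f(x) = max_{s ∈ S} f_s(x) of C² functions f_s with S finite. If f grows sharply around x* (i.e., there are a neighborhood U of x* and β > 0 with f(x) ≥ f(x*) + β‖x - x*‖ on U), then property (P) holds with p = 1: there exist an open neighborhood U' of x* and C > 0 such that (f(x) - min_{z ∈ closedBall(x,Δ)} f(z))/Δ ≥ C for all x ∈ U' and all Δ > 0 with ‖x - x*‖ > Δ. -/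
set_option maxHeartbeats 1000000


open Metric

private lemma taylor_bound_aux {E : Type*} [NormedAddCommGroup E] [NormedSpace ℝ E]
    {g : E → ℝ} (hg : Differentiable ℝ g) {c : E} {r M : ℝ} (hM : 0 ≤ M)
    (hlip : ∀ a ∈ closedBall c r, ∀ b ∈ closedBall c r,
      ‖fderiv ℝ g a - fderiv ℝ g b‖ ≤ M * ‖a - b‖)
    {a b : E} (ha : a ∈ closedBall c r) (hb : b ∈ closedBall c r) :
    ‖g b - g a - fderiv ℝ g a (b - a)‖ ≤ M * ‖b - a‖ * ‖b - a‖ := by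
  set s : Set E := closedBall a ‖b - a‖ ∩ closedBall c r with hs
  have hconv : Convex ℝ s := (convex_closedBall _ _).inter (convex_closedBall _ _)
  have has : a ∈ s := ⟨mem_closedBall_self (norm_nonneg _), ha⟩
  have hbs : b ∈ s := ⟨by simp [mem_closedBall, dist_eq_norm], hb⟩
  refine hconv.norm_image_sub_le_of_norm_fderiv_le' (fun y _ => hg y) (fun y hy => ?_) has hbs
  calc ‖fderiv ℝ g y - fderiv ℝ g a‖ ≤ M * ‖y - a‖ := hlip y hy.2 a ha
    _ ≤ M * ‖b - a‖ := by
        have : ‖y - a‖ ≤ ‖b - a‖ := by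
          have := hy.1; rw [mem_closedBall, dist_eq_norm] at this; exact this
        nlinarith

theorem stmt7 {n : ℕ} {ι : Type*} [Fintype ι] [Nonempty ι]
    (fs : ι → EuclideanSpace ℝ (Fin n) → ℝ) (hfs : ∀ s, ContDiff ℝ 2 (fs s))
    (f : EuclideanSpace ℝ (Fin n) → ℝ)
    (hf : ∀ x, (∀ s, fs s x ≤ f x) ∧ ∃ s, fs s x = f x)
    (xstar : EuclideanSpace ℝ (Fin n)) (β : ℝ) (hβ : 0 < β)
    (hgrowth : ∃ U ∈ nhds xstar, ∀ x ∈ U, f xstar + β * ‖x - xstar‖ ≤ f x) :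
    ∃ U' : Set (EuclideanSpace ℝ (Fin n)), IsOpen U' ∧ xstar ∈ U' ∧
      ∃ C : ℝ, 0 < C ∧ ∀ x ∈ U', ∀ Δ : ℝ, 0 < Δ → Δ < ‖x - xstar‖ →
        C ≤ (f x - sInf (f '' closedBall x Δ)) / Δ := by
  classical
  obtain ⟨U, hU, hgr⟩ := hgrowth
  obtain ⟨r0, hr0pos, hr0U⟩ := Metric.nhds_basis_closedBall.mem_iff.mp hU
  -- differentiability
  have hdiff : ∀ s, Differentiable ℝ (fs s) := fun s =>
    (hfs s).differentiable (by norm_num)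
  have hd1 : ∀ s, ContDiff ℝ 1 (fderiv ℝ (fs s)) := fun s =>
    (hfs s).fderiv_right (le_refl 2)
  -- bound on second derivative on the compact ball
  have hbd : ∀ s : ι, ∃ Cs : ℝ, ∀ y ∈ closedBall xstar r0,
      ‖fderiv ℝ (fderiv ℝ (fs s)) y‖ ≤ Cs := by
    intro s
    obtain ⟨Cs, hCs⟩ := (isCompact_closedBall xstar r0).exists_bound_of_continuousOn
      ((hd1 s).continuous_fderiv one_ne_zero).continuousOn
    exact ⟨Cs, hCs⟩
  choose Cs hCs using hbd
  set M : ℝ := max (Finset.univ.sup' Finset.univ_nonempty Cs) 1 with hMdef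
  have hM1 : (1:ℝ) ≤ M := le_max_right _ _
  have hMpos : 0 < M := lt_of_lt_of_le one_pos hM1
  have hMs : ∀ s, ∀ y ∈ closedBall xstar r0, ‖fderiv ℝ (fderiv ℝ (fs s)) y‖ ≤ M := by
    intro s y hy
    exact le_trans (hCs s y hy)
      (le_trans (Finset.le_sup' Cs (Finset.mem_univ s)) (le_max_left _ _))
  -- Lipschitz bound for the first derivative on the ball
  have hlip : ∀ s, ∀ a ∈ closedBall xstar r0, ∀ b ∈ closedBall xstar r0,
      ‖fderiv ℝ (fs s) a - fderiv ℝ (fs s) b‖ ≤ M * ‖a - b‖ := by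
    intro s a ha b hb
    exact (convex_closedBall xstar r0).norm_image_sub_le_of_norm_fderiv_le
      (fun y _ => ((hd1 s).differentiable one_ne_zero) y) (hMs s) hb ha
  -- Taylor bound
  have htaylor : ∀ s, ∀ a ∈ closedBall xstar r0, ∀ b ∈ closedBall xstar r0,
      ‖fs s b - fs s a - fderiv ℝ (fs s) a (b - a)‖ ≤ M * ‖b - a‖ * ‖b - a‖ :=
    fun s a ha b hb => taylor_bound_aux (hdiff s) hMpos.le (hlip s) ha hb
  -- the neighborhood
  set r1 : ℝ := min r0 (β / (6 * M)) with hr1def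
  have hr1pos : 0 < r1 := lt_min hr0pos (by positivity)
  refine ⟨ball xstar r1, isOpen_ball, mem_ball_self hr1pos, β / 2, by positivity, ?_⟩
  intro x hx Δ hΔ hΔr
  set r : ℝ := ‖x - xstar‖ with hrdef
  have hrpos : 0 < r := lt_trans hΔ hΔr
  have hrr1 : r < r1 := by
    rw [mem_ball, dist_eq_norm] at hx; exact hx
  have hrr0 : r ≤ r0 := le_trans hrr1.le (min_le_left _ _)
  have hrβ : 3 * M * r ≤ β / 2 := by
    have : r ≤ β / (6 * M) := le_trans hrr1.le (min_le_right _ _)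
    rw [le_div_iff₀ (by positivity)] at this
    nlinarith
  set u : EuclideanSpace ℝ (Fin n) := r⁻¹ • (x - xstar) with hudef
  have hu : ‖u‖ = 1 := by
    rw [hudef, norm_smul, norm_inv, Real.norm_eq_abs, abs_of_pos hrpos, ← hrdef]
    field_simp
  set z : EuclideanSpace ℝ (Fin n) := x - Δ • u with hzdef
  have hzx : x - z = Δ • u := by rw [hzdef]; abel
  have hxz : ‖x - z‖ = Δ := by rw [hzx, norm_smul, hu, Real.norm_eq_abs, abs_of_pos hΔ]; ring
  set σ : ℝ := r - Δ with hσdef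
  have hσpos : 0 < σ := by simp [hσdef]; linarith
  have hru : r • u = x - xstar := by
    rw [hudef, smul_smul, mul_inv_cancel₀ hrpos.ne', one_smul]
  have hzstar : z - xstar = σ • u := by
    rw [hzdef, hσdef, sub_smul, hru]; abel
  have hznorm : ‖z - xstar‖ = σ := by
    rw [hzstar, norm_smul, hu, Real.norm_eq_abs, abs_of_pos hσpos]; ring
  -- memberships in the big ball
  have hxball : x ∈ closedBall xstar r0 := by
    rw [mem_closedBall, dist_eq_norm]; exact le_trans (le_of_eq rfl) hrr0
  have hzball : z ∈ closedBall xstar r0 := by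
    rw [mem_closedBall, dist_eq_norm, hznorm]; linarith
  have hsball : xstar ∈ closedBall xstar r0 := mem_closedBall_self hr0pos.le
  -- growth at z
  have hgz : f xstar + β * σ ≤ f z := by
    have := hgr z (hr0U hzball)
    rwa [hznorm] at this
  obtain ⟨s', hs'⟩ := (hf z).2
  set D := fderiv ℝ (fs s') with hDdef
  -- step 1 : D xstar u ≥ β - M σ
  have h1 : fs s' z - fs s' xstar ≥ β * σ := by
    have h2 : fs s' xstar ≤ f xstar := (hf xstar).1 s'
    linarith [hgz, hs'.ge, hs'.le]
  have htay1 := htaylor s' xstar hsball z hzball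
  have hz_sub : z - xstar = σ • u := hzstar
  have hDz : D xstar (z - xstar) = σ * D xstar u := by
    rw [hz_sub, map_smul]; simp
  have h3 : β * σ - M * σ * σ ≤ σ * D xstar u := by
    have habs := abs_le.mp (by rwa [Real.norm_eq_abs, hznorm] at htay1)
    rw [hDz] at habs
    linarith [habs.2, h1]
  have h4 : β - M * σ ≤ D xstar u := by
    have h3' : σ * (β - M * σ) ≤ σ * D xstar u := by nlinarith [h3]
    exact le_of_mul_le_mul_left h3' hσpos
  -- step 2 : D z u ≥ β - 2 M σ
  have h5 : ‖D z - D xstar‖ ≤ M * σ := by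
    have := hlip s' z hzball xstar hsball
    rwa [show z - xstar = σ • u from hzstar, norm_smul, hu, Real.norm_eq_abs,
      abs_of_pos hσpos, mul_one] at this
  have h6 : β - 2 * M * σ ≤ D z u := by
    have h7 : |D z u - D xstar u| ≤ M * σ := by
      calc |D z u - D xstar u| = ‖(D z - D xstar) u‖ := by
            rw [ContinuousLinearMap.sub_apply]; simp [Real.norm_eq_abs]
        _ ≤ ‖D z - D xstar‖ * ‖u‖ := (D z - D xstar).le_opNorm u
        _ ≤ M * σ := by rw [hu, mul_one]; exact h5
    have := (abs_le.mp h7).1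
    linarith
  -- step 3 : fs s' x - fs s' z ≥ Δ (β - 3 M r)
  have htay2 := htaylor s' z hzball x hxball
  have hDzx : D z (x - z) = Δ * D z u := by rw [hzx, map_smul]; simp
  have h8 : Δ * D z u - M * Δ * Δ ≤ fs s' x - fs s' z := by
    have habs := abs_le.mp (by rwa [Real.norm_eq_abs, hxz] at htay2)
    rw [hDzx] at habs
    linarith [habs.1]
  have hΔr' : Δ ≤ r := hΔr.le
  have hσr : σ ≤ r := by simp [hσdef]; linarith
  have h9 : Δ * (β / 2) ≤ fs s' x - fs s' z := by
    nlinarith [mul_le_mul_of_nonneg_left h6 hΔ.le,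
      mul_nonneg (mul_nonneg hMpos.le hΔ.le) (sub_nonneg.mpr hσr),
      mul_nonneg (mul_nonneg hMpos.le hΔ.le) (sub_nonneg.mpr hΔr'),
      mul_le_mul_of_nonneg_left hrβ hΔ.le]
  -- conclude
  have hfx : fs s' x ≤ f x := (hf x).1 s'
  have hfz : f z = fs s' z := hs'.symm
  have hmain : Δ * (β / 2) ≤ f x - f z := by rw [hfz]; linarith
  -- sInf bound
  have hzmem : z ∈ closedBall x Δ := by
    rw [mem_closedBall, dist_eq_norm, ← norm_neg, neg_sub, hxz]
  have hbdd : BddBelow (f '' closedBall x Δ) := by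
    obtain ⟨s0⟩ := ‹Nonempty ι›
    obtain ⟨C0, hC0⟩ := (isCompact_closedBall x Δ).exists_bound_of_continuousOn
      ((hfs s0).continuous.continuousOn)
    refine ⟨-C0, fun v hv => ?_⟩
    obtain ⟨y, hy, rfl⟩ := hv
    have := hC0 y hy
    have h := (hf y).1 s0
    have : -C0 ≤ fs s0 y := by
      have := abs_le.mp (by rwa [Real.norm_eq_abs] at this)
      linarith [this.1]
    linarith
  have hsinf : sInf (f '' closedBall x Δ) ≤ f z :=
    csInf_le hbdd ⟨z, hzmem, rfl⟩
  rw [le_div_iff₀ hΔ]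
  linarith
end
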